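/- If X and Y are unsplittable permutation classes, then the inflation class X[Y] is unsplittable. -/

import Mathlib

/-- A permutation of some finite length `n`, as a bijection of `Fin n`. -/
abbrev PPerm : Type := Σ n : ℕ, Equiv.Perm (Fin n)

/-- `Contains π σ` : the pattern `σ` occurs in (is contained in) `π`. -/
def Contains (π σ : PPerm) : Prop :=
  ∃ f : Fin σ.1 → Fin π.1, StrictMono f ∧
    ∀ i j, σ.2 i < σ.2 j ↔ π.2 (f i) < π.2 (f j)

/-- A permutation class: a set of permutations closed downwards under containment. -/
def IsPermClass (C : Set PPerm) : Prop :=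
  ∀ π ∈ C, ∀ σ : PPerm, Contains π σ → σ ∈ C

/-- `σ` is (exactly) the pattern of the set `S` of points of `π`. -/
def PatternOf (π : PPerm) (S : Set (Fin π.1)) (σ : PPerm) : Prop :=
  ∃ f : Fin σ.1 → Fin π.1, StrictMono f ∧ Set.range f = S ∧
    ∀ i j, σ.2 i < σ.2 j ↔ π.2 (f i) < π.2 (f j)

/-- The points of `π` lying in `S` contain an occurrence of `σ`. -/
def ContainsIn (π : PPerm) (S : Set (Fin π.1)) (σ : PPerm) : Prop :=
  ∃ f : Fin σ.1 → Fin π.1, StrictMono f ∧ (∀ i, f i ∈ S) ∧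
    ∀ i j, σ.2 i < σ.2 j ↔ π.2 (f i) < π.2 (f j)

/-- `π` is a merge of `σ` and `τ`: its points split into a part with pattern `σ`
and a part with pattern `τ`. -/
def IsMerge (π σ τ : PPerm) : Prop :=
  ∃ S : Set (Fin π.1), PatternOf π S σ ∧ PatternOf π Sᶜ τ

/-- Merge of two classes. -/
def MergeCl (C D : Set PPerm) : Set PPerm :=
  {π | ∃ σ ∈ C, ∃ τ ∈ D, IsMerge π σ τ}

/-- The empty permutation. -/
def pempty : PPerm := ⟨0, 1⟩

/-- The singleton permutation `1`. -/
def pone : PPerm := ⟨1, 1⟩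

/-- Iterated merge of a list of classes. -/
def MergeAll : List (Set PPerm) → Set PPerm
  | [] => {pempty}
  | [C] => C
  | C :: D :: Cs => MergeCl C (MergeAll (D :: Cs))

/-- A class is splittable if it is contained in the merge of finitely many
of its proper subclasses. -/
def Splittable (C : Set PPerm) : Prop :=
  ∃ Cs : List (Set PPerm), Cs ≠ [] ∧
    (∀ D ∈ Cs, IsPermClass D ∧ D ⊆ C ∧ D ≠ C) ∧ C ⊆ MergeAll Cs

/-- A class is atomic if it is not the union of two proper subclasses. -/
def Atomic (C : Set PPerm) : Prop :=
  ¬ ∃ D E : Set PPerm, IsPermClass D ∧ IsPermClass E ∧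
      D ⊆ C ∧ D ≠ C ∧ E ⊆ C ∧ E ≠ C ∧ C = D ∪ E

/-- Inflation `A[B]` of a class `A` by a class `B`: `π` decomposes into
consecutive nonempty blocks (given by the fibres of the monotone surjection `g`),
the relative order of distinct blocks follows `σ ∈ A`, and each block has its
pattern in `B`. -/
def Inflate (A B : Set PPerm) : Set PPerm :=
  {π | ∃ σ ∈ A, ∃ g : Fin π.1 → Fin σ.1, Monotone g ∧ Function.Surjective g ∧
    (∀ p q, g p ≠ g q → (π.2 p < π.2 q ↔ σ.2 (g p) < σ.2 (g q))) ∧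
    ∀ b : Fin σ.1, ∃ τ ∈ B, PatternOf π {p | g p = b} τ}

/-- Direct sum `σ ⊕ τ`. -/
def psum (σ τ : PPerm) : PPerm :=
  ⟨σ.1 + τ.1, finSumFinEquiv.permCongr (σ.2.sumCongr τ.2)⟩

/-- Skew sum `σ ⊖ τ`. -/
def pskew (σ τ : PPerm) : PPerm :=
  ⟨σ.1 + τ.1,
    finSumFinEquiv.symm.trans ((σ.2.sumCongr τ.2).trans
      ((Equiv.sumComm (Fin σ.1) (Fin τ.1)).trans
        (finSumFinEquiv.trans (finCongr (Nat.add_comm τ.1 σ.1)))))⟩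

/-- Sum-decomposable: a direct sum of two nonempty permutations. -/
def SumDecomp (π : PPerm) : Prop :=
  ∃ σ τ : PPerm, 0 < σ.1 ∧ 0 < τ.1 ∧ π = psum σ τ

/-- Skew-decomposable: a skew sum of two nonempty permutations. -/
def SkewDecomp (π : PPerm) : Prop :=
  ∃ σ τ : PPerm, 0 < σ.1 ∧ 0 < τ.1 ∧ π = pskew σ τ

def SumClosed (C : Set PPerm) : Prop := ∀ σ ∈ C, ∀ τ ∈ C, psum σ τ ∈ C

def SkewClosed (C : Set PPerm) : Prop := ∀ σ ∈ C, ∀ τ ∈ C, pskew σ τ ∈ C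

/-- The class of permutations avoiding the pattern `σ`. -/
def Av (σ : PPerm) : Set PPerm := {π | ¬ Contains π σ}

/-- The basis of a class: minimal permutations not belonging to it. -/
def PBasis (C : Set PPerm) : Set PPerm :=
  {π | π ∉ C ∧ ∀ σ : PPerm, Contains π σ → σ ≠ π → σ ∈ C}

/-- An interval of `π`: a set of points contiguous in positions and in values. -/
def IsInterval (π : PPerm) (S : Set (Fin π.1)) : Prop :=
  (∀ a ∈ S, ∀ b ∈ S, ∀ c, a ≤ c → c ≤ b → c ∈ S) ∧
  (∀ a ∈ S, ∀ b ∈ S, ∀ c, π.2 a ≤ π.2 c → π.2 c ≤ π.2 b → c ∈ S)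

/-- A simple permutation: its only intervals are the subsingletons and the whole. -/
def SimplePerm (π : PPerm) : Prop :=
  ∀ S : Set (Fin π.1), IsInterval π S → S.Subsingleton ∨ S = Set.univ

/-- Build a permutation from a function with an explicit inverse. -/
def mkP {n : ℕ} (f g : Fin n → Fin n)
    (h₁ : ∀ i, g (f i) = i) (h₂ : ∀ i, f (g i) = i) : PPerm :=
  ⟨n, ⟨f, g, h₁, h₂⟩⟩

def p12 : PPerm := ⟨2, 1⟩
def p21 : PPerm := mkP ![1,0] ![1,0] (by decide) (by decide)
def p213 : PPerm := mkP ![1,0,2] ![1,0,2] (by decide) (by decide)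
def p231 : PPerm := mkP ![1,2,0] ![2,0,1] (by decide) (by decide)
def p312 : PPerm := mkP ![2,0,1] ![1,2,0] (by decide) (by decide)
def p1234 : PPerm := ⟨4, 1⟩
def p2143 : PPerm := mkP ![1,0,3,2] ![1,0,3,2] (by decide) (by decide)
def p3412 : PPerm := mkP ![2,3,0,1] ![2,3,0,1] (by decide) (by decide)
def p4321 : PPerm := mkP ![3,2,1,0] ![3,2,1,0] (by decide) (by decide)
def p2413 : PPerm := mkP ![1,3,0,2] ![2,0,3,1] (by decide) (by decide)
def p3142 : PPerm := mkP ![2,0,3,1] ![1,3,0,2] (by decide) (by decide)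

/-- The class `I` of increasing permutations. -/
def IncCl : Set PPerm := Av p21
/-- The class `D` of decreasing permutations. -/
def DecCl : Set PPerm := Av p12
/-- The class `Av(213)`. -/
def Av213 : Set PPerm := Av p213
/-- The class `L = Av(231, 312)` of layered permutations. -/
def Layered : Set PPerm := Av p231 ∩ Av p312
/-- Separable permutations, characterised by avoidance of `2413` and `3142`. -/
def SepA : Set PPerm := Av p2413 ∩ Av p3142
/-- Separable permutations avoiding every element of `F`. -/
def Avs (F : Set PPerm) : Set PPerm := {π ∈ SepA | ∀ τ ∈ F, ¬ Contains π τ}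
/-- The class of separable permutations, defined as the smallest permutation class
containing `1` and closed under direct sums and skew sums. -/
def SepCl : Set PPerm :=
  ⋂₀ {C : Set PPerm | IsPermClass C ∧ pone ∈ C ∧
      ∀ σ ∈ C, ∀ τ ∈ C, psum σ τ ∈ C ∧ pskew σ τ ∈ C}
section Helpers

open Function Set

lemma contains_refl (π : PPerm) : Contains π π :=
  ⟨id, strictMono_id, fun _ _ => Iff.rfl⟩

lemma contains_trans {π σ δ : PPerm} (h1 : Contains π σ) (h2 : Contains σ δ) :
    Contains π δ := by
  obtain ⟨f, hf1, hf2⟩ := h1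
  obtain ⟨g, hg1, hg2⟩ := h2
  exact ⟨f ∘ g, hf1.comp hg1, fun i j => (hg2 i j).trans (hf2 (g i) (g j))⟩

lemma eq_pempty_of_len_zero {π : PPerm} (h : π.1 = 0) : π = pempty := by
  obtain ⟨n, e⟩ := π
  subst h
  have : e = (1 : Equiv.Perm (Fin 0)) := by
    ext x; exact x.elim0
  rw [this]; rfl

lemma contains_pempty (π : PPerm) : Contains π pempty :=
  ⟨fun x => x.elim0, fun x => x.elim0, fun x => x.elim0⟩

lemma contains_of_len_zero {σ : PPerm} (h : σ.1 = 0) (π : PPerm) : Contains π σ := by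
  rw [eq_pempty_of_len_zero h]; exact contains_pempty π

lemma pempty_mem {C : Set PPerm} (hC : IsPermClass C) (hne : C.Nonempty) : pempty ∈ C := by
  obtain ⟨x, hx⟩ := hne
  exact hC x hx pempty (contains_pempty x)

lemma isPermClass_av (σ : PPerm) : IsPermClass (Av σ) := by
  intro π hπ τ hτ hc
  exact hπ (contains_trans hτ hc)

lemma isPermClass_inter {C D : Set PPerm} (hC : IsPermClass C) (hD : IsPermClass D) :
    IsPermClass (C ∩ D) := fun π hπ σ h => ⟨hC π hπ.1 σ h, hD π hπ.2 σ h⟩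

/-- Pull an occurrence lying inside the range of a pattern map back. -/
lemma occ_restrict {π π' δ : PPerm} (f : Fin π'.1 → Fin π.1) (hf : StrictMono f)
    (hord : ∀ i j, π'.2 i < π'.2 j ↔ π.2 (f i) < π.2 (f j))
    (h : Fin δ.1 → Fin π.1) (hh : StrictMono h) (hrange : ∀ i, h i ∈ Set.range f)
    (hord2 : ∀ i j, δ.2 i < δ.2 j ↔ π.2 (h i) < π.2 (h j)) :
    ∃ h' : Fin δ.1 → Fin π'.1, StrictMono h' ∧ (∀ i, f (h' i) = h i) ∧
      ∀ i j, δ.2 i < δ.2 j ↔ π'.2 (h' i) < π'.2 (h' j) := by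
  have hch : ∀ i, ∃ q, f q = h i := fun i => hrange i
  choose h' hh' using hch
  refine ⟨h', ?_, hh', ?_⟩
  · intro i j hij
    have : f (h' i) < f (h' j) := by rw [hh' i, hh' j]; exact hh hij
    exact hf.lt_iff_lt.mp this
  · intro i j
    rw [hord2 i j, hord (h' i) (h' j), hh' i, hh' j]

lemma patternOf_contains {π σ : PPerm} {S : Set (Fin π.1)} (h : PatternOf π S σ) :
    Contains π σ := by
  obtain ⟨f, h1, _, h3⟩ := h
  exact ⟨f, h1, h3⟩

/-- If `ρ` is the pattern of `S` and `δ` occurs within `S`, then `ρ` contains `δ`. -/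
lemma contains_of_containsIn {π ρ δ : PPerm} {S : Set (Fin π.1)}
    (hρ : PatternOf π S ρ) (h : ContainsIn π S δ) : Contains ρ δ := by
  obtain ⟨f, hf1, hf2, hf3⟩ := hρ
  obtain ⟨g, hg1, hg2, hg3⟩ := h
  obtain ⟨h', h1, _, h3⟩ := occ_restrict f hf1 hf3 g hg1 (fun i => hf2 ▸ hg2 i) hg3
  exact ⟨h', h1, h3⟩

/-- `PatternOf π univ ρ` lets us embed `π` into `ρ`. -/
lemma contains_of_patternOf_univ {π ρ : PPerm} (h : PatternOf π Set.univ ρ) :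
    Contains ρ π := by
  obtain ⟨f, hf1, hf2, hf3⟩ := h
  have hsurj : Function.Surjective f := by
    intro x
    have : x ∈ Set.range f := hf2 ▸ Set.mem_univ x
    exact this
  choose g hg using hsurj
  refine ⟨g, ?_, ?_⟩
  · intro x y hxy
    apply hf1.lt_iff_lt.mp
    rw [hg x, hg y]; exact hxy
  · intro i j
    rw [hf3 (g i) (g j), hg i, hg j]

lemma existsPatternOf (π : PPerm) (S : Set (Fin π.1)) : ∃ ρ : PPerm, PatternOf π S ρ := by
  classical
  have hfin : S.Finite := Set.toFinite S
  set F : Finset (Fin π.1) := hfin.toFinset with hF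
  let e : Fin F.card ≃o F := F.orderIsoOfFin rfl
  let f : Fin F.card → Fin π.1 := fun i => (e i : Fin π.1)
  have hfmono : StrictMono f := by
    intro i j hij
    exact Subtype.coe_lt_coe.mpr (e.lt_iff_lt.mpr hij)
  have hrange : Set.range f = S := by
    ext x
    constructor
    · rintro ⟨i, rfl⟩
      have := (e i).2
      rwa [Set.Finite.mem_toFinset] at this
    · intro hx
      have hxF : x ∈ F := (Set.Finite.mem_toFinset hfin).mpr hx
      exact ⟨e.symm ⟨x, hxF⟩, by simp [f]⟩
  let V : Finset (Fin π.1) := Finset.image (fun i => π.2 (f i)) Finset.univ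
  have hV : V.card = F.card := by
    have hinj : Function.Injective (fun i => π.2 (f i)) :=
      fun i j h => hfmono.injective (π.2.injective h)
    rw [Finset.card_image_of_injective _ hinj]
    exact Finset.card_univ.trans (Fintype.card_fin _)
  let e2 : Fin F.card ≃o V := V.orderIsoOfFin hV
  have hmemV : ∀ i, π.2 (f i) ∈ V := fun i => Finset.mem_image_of_mem _ (Finset.mem_univ i)
  let val : Fin F.card → Fin F.card := fun i => e2.symm ⟨π.2 (f i), hmemV i⟩
  have hvalinj : Function.Injective val := by
    intro i j hij
    have : π.2 (f i) = π.2 (f j) := by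
      have := congrArg e2 hij
      simpa [val] using congrArg Subtype.val this
    exact hfmono.injective (π.2.injective this)
  have hord : ∀ i j, val i < val j ↔ π.2 (f i) < π.2 (f j) := by
    intro i j
    rw [← e2.lt_iff_lt]
    simp [val, Subtype.coe_lt_coe]
  refine ⟨⟨F.card, Equiv.ofBijective val (Finite.injective_iff_bijective.mp hvalinj)⟩,
    f, hfmono, hrange, ?_⟩
  intro i j
  exact hord i j

end Helpers
section MergeHelpers

open Function Set

lemma not_mem_mergeAll_of_empty : ∀ (Cs : List (Set PPerm)), Cs ≠ [] → ∅ ∈ Cs →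
    ∀ π, π ∉ MergeAll Cs := by
  intro Cs
  induction Cs with
  | nil => intro h; exact absurd rfl h
  | cons C tail ih =>
    intro _ hmem π hπ
    cases tail with
    | nil =>
      simp at hmem
      subst hmem
      exact hπ
    | cons D rest =>
      rcases List.mem_cons.mp hmem with h | h
      · subst h
        obtain ⟨σ, hσ, _⟩ := hπ
        exact hσ
      · obtain ⟨σ, hσ, τ, hτ, _⟩ := hπ
        exact ih (by simp) h τ hτ

/-- Extract a colouring from a merge decomposition. -/
lemma mergeAll_extract : ∀ (Cs : List (Set PPerm)) (π : PPerm), Cs ≠ [] →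
    π ∈ MergeAll Cs → ∃ c : Fin π.1 → Fin Cs.length,
      ∀ i : Fin Cs.length, ∃ ρ ∈ Cs.get i, PatternOf π {p | c p = i} ρ := by
  intro Cs
  induction Cs with
  | nil => intro π h; exact absurd rfl h
  | cons C tail ih =>
    intro π _ hπ
    cases tail with
    | nil =>
      refine ⟨fun _ => ⟨0, by simp⟩, ?_⟩
      intro i
      have hsub : ∀ x y : Fin ([C].length), x = y := by
        intro x y
        apply Fin.ext
        have hx := x.isLt
        have hy := y.isLt
        simp only [List.length_cons, List.length_nil] at hx hy
        omega
      refine ⟨π, by simpa [List.get] using (show π ∈ C from hπ), id, strictMono_id, ?_, fun _ _ => Iff.rfl⟩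
      rw [Set.range_id]
      exact (Set.eq_univ_iff_forall.mpr fun p => hsub _ i).symm
    | cons D rest =>
      obtain ⟨ρ₀, hρ₀, π', hπ', S, hS, hSc⟩ := hπ
      obtain ⟨f', hf'm, hf'r, hf'o⟩ := hSc
      obtain ⟨c', hc'⟩ := ih π' (by simp) hπ'
      classical
      have hpre : ∀ p, p ∉ S → ∃ q, f' q = p := by
        intro p hp
        have : p ∈ Set.range f' := by rw [hf'r]; exact hp
        exact this
      let c : Fin π.1 → Fin (D :: rest).length.succ := fun p =>
        if h : p ∈ S then 0 else (c' ((hpre p h).choose)).succ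
      refine ⟨c, ?_⟩
      intro i
      induction i using Fin.cases with
      | zero =>
        refine ⟨ρ₀, hρ₀, ?_⟩
        have hset : {p | c p = 0} = S := by
          ext p
          simp only [Set.mem_setOf_eq, c]
          constructor
          · intro h
            by_contra hp
            rw [dif_neg hp] at h
            exact Fin.succ_ne_zero _ h
          · intro h; rw [dif_pos h]
        rw [hset]; exact hS
      | succ i' =>
        obtain ⟨ρ, hρ, h, hh1, hh2, hh3⟩ := hc' i'
        refine ⟨ρ, by simpa using hρ, f' ∘ h, hf'm.comp hh1, ?_, ?_⟩
        · have hset : {p | c p = Fin.succ i'} = f' '' {q | c' q = i'} := by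
            ext p
            simp only [Set.mem_setOf_eq, Set.mem_image, c]
            constructor
            · intro hc
              by_cases hp : p ∈ S
              · rw [dif_pos hp] at hc
                exact absurd hc.symm (Fin.succ_ne_zero _)
              · rw [dif_neg hp] at hc
                exact ⟨(hpre p hp).choose, Fin.succ_injective _ hc, (hpre p hp).choose_spec⟩
            · rintro ⟨q, hq, rfl⟩
              have hp : f' q ∉ S := by
                have : f' q ∈ Set.range f' := ⟨q, rfl⟩
                rw [hf'r] at this
                exact this
              rw [dif_neg hp]
              have : (hpre (f' q) hp).choose = q :=
                hf'm.injective (hpre (f' q) hp).choose_spec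
              rw [this, hq]
          rw [hset, ← hh2, Set.range_comp]
        · intro a b
          rw [hh3 a b, hf'o (h a) (h b)]
          rfl

lemma mergeAll_replicate_succ (D : Set PPerm) (k : ℕ) (hk : 0 < k) :
    MergeAll (List.replicate (k + 1) D) = MergeCl D (MergeAll (List.replicate k D)) := by
  obtain ⟨k', rfl⟩ := Nat.exists_eq_succ_of_ne_zero hk.ne'
  rfl

/-- Build a merge decomposition from a colouring all of whose classes pattern into `D`. -/
lemma mem_mergeAll_replicate (D : Set PPerm) (hD : IsPermClass D) :
    ∀ (k : ℕ), 0 < k → ∀ (π : PPerm) (c : Fin π.1 → Fin k),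
      (∀ i : Fin k, ∃ ρ ∈ D, PatternOf π {p | c p = i} ρ) →
      π ∈ MergeAll (List.replicate k D) := by
  intro k
  induction k with
  | zero => intro h; exact absurd h (by simp)
  | succ k ih =>
    intro _ π c hc
    by_cases hk : k = 0
    · subst hk
      obtain ⟨ρ, hρ, hpat⟩ := hc 0
      have hset : {p | c p = 0} = Set.univ := by
        apply Set.eq_univ_iff_forall.mpr
        intro p
        have := (c p).isLt
        show c p = 0
        apply Fin.ext
        omega
      rw [hset] at hpat
      have : π ∈ D := hD ρ hρ π (contains_of_patternOf_univ hpat)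
      simpa [MergeAll] using this
    · have hk' : 0 < k := Nat.pos_of_ne_zero hk
      classical
      set S : Set (Fin π.1) := {p | c p = 0} with hSdef
      obtain ⟨ρ₀, hρ₀, hpat₀⟩ := hc 0
      obtain ⟨π', f', hf'm, hf'r, hf'o⟩ := existsPatternOf π Sᶜ
      have hne0 : ∀ q : Fin π'.1, c (f' q) ≠ 0 := by
        intro q
        have : f' q ∈ Sᶜ := by rw [← hf'r]; exact ⟨q, rfl⟩
        exact this
      let c' : Fin π'.1 → Fin k := fun q =>
        ⟨(c (f' q)).val - 1, by
          have h1 : (c (f' q)).val ≠ 0 := fun h => hne0 q (Fin.ext h)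
          have h2 := (c (f' q)).isLt
          omega⟩
      have hc'succ : ∀ (q : Fin π'.1) (i' : Fin k), c' q = i' ↔ c (f' q) = i'.succ := by
        intro q i'
        constructor
        · intro h
          apply Fin.ext
          have h1 : (c (f' q)).val ≠ 0 := fun hh => hne0 q (Fin.ext hh)
          have := congrArg Fin.val h
          simp only [c'] at this
          simp [Fin.val_succ]
          omega
        · intro h
          apply Fin.ext
          have := congrArg Fin.val h
          simp only [c']
          simp [Fin.val_succ] at this
          omega
      have hc' : ∀ i' : Fin k, ∃ ρ ∈ D, PatternOf π' {q | c' q = i'} ρ := by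
        intro i'
        obtain ⟨ρ, hρ, h, hh1, hh2, hh3⟩ := hc i'.succ
        have hsub : ∀ x, h x ∈ Set.range f' := by
          intro x
          rw [hf'r]
          have : h x ∈ {p | c p = i'.succ} := by rw [← hh2]; exact ⟨x, rfl⟩
          intro hmem
          rw [hSdef] at hmem
          have : c (h x) = i'.succ := this
          rw [hmem] at this
          exact Fin.succ_ne_zero i' this.symm
        obtain ⟨h', hh'1, hh'2, hh'3⟩ := occ_restrict f' hf'm hf'o h hh1 hsub hh3
        refine ⟨ρ, hρ, h', hh'1, ?_, hh'3⟩
        ext q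
        constructor
        · rintro ⟨x, rfl⟩
          show c' (h' x) = i'
          rw [hc'succ]
          rw [hh'2 x]
          have : h x ∈ {p | c p = i'.succ} := by rw [← hh2]; exact ⟨x, rfl⟩
          exact this
        · intro hq
          have hq' : c (f' q) = i'.succ := (hc'succ q i').mp hq
          have : f' q ∈ Set.range h := by rw [hh2]; exact hq'
          obtain ⟨x, hx⟩ := this
          have : f' (h' x) = f' q := by rw [hh'2 x, hx]
          exact ⟨x, hf'm.injective this⟩
      have hπ' : π' ∈ MergeAll (List.replicate k D) := ih hk' π' c' hc'
      rw [mergeAll_replicate_succ D k hk']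
      exact ⟨ρ₀, hρ₀, π', hπ', S, hpat₀, ⟨f', hf'm, hf'r, hf'o⟩⟩

end MergeHelpers
section RamseyJep

open Function Set

/-- The Ramsey property extracted from unsplittability. -/
lemma ramsey_of_unsplittable {C : Set PPerm} (hC : IsPermClass C) (hns : ¬ Splittable C)
    {δ : PPerm} (hδ : δ ∈ C) (k : ℕ) (hk : 0 < k) :
    ∃ π ∈ C, ∀ c : Fin π.1 → Fin k, ∃ i : Fin k, ∃ h : Fin δ.1 → Fin π.1,
      StrictMono h ∧ (∀ x, c (h x) = i) ∧
      ∀ x y, δ.2 x < δ.2 y ↔ π.2 (h x) < π.2 (h y) := by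
  classical
  by_contra hcon
  push_neg at hcon
  set D : Set PPerm := C ∩ Av δ with hDdef
  have hDclass : IsPermClass D := isPermClass_inter hC (isPermClass_av δ)
  apply hns
  refine ⟨List.replicate k D, by simp [hk.ne'], ?_, ?_⟩
  · intro E hE
    rw [List.eq_of_mem_replicate hE]
    refine ⟨hDclass, Set.inter_subset_left, ?_⟩
    intro h
    have hδD : δ ∈ D := by rw [h]; exact hδ
    exact hδD.2 (contains_refl δ)
  · intro π hπ
    obtain ⟨c, hc⟩ := hcon π hπ
    have hlen : (List.replicate k D).length = k := List.length_replicate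
    have : ∀ i : Fin k, ∃ ρ ∈ D, PatternOf π {p | c p = i} ρ := by
      intro i
      obtain ⟨ρ, f, hf1, hf2, hf3⟩ := existsPatternOf π {p | c p = i}
      refine ⟨ρ, ⟨hC π hπ ρ ⟨f, hf1, hf3⟩, ?_⟩, ⟨f, hf1, hf2, hf3⟩⟩
      intro hcont
      obtain ⟨m, hm1, hm2⟩ := hcont
      have hmem : ∀ x, c ((f ∘ m) x) = i := by
        intro x
        have : f (m x) ∈ {p | c p = i} := by rw [← hf2]; exact ⟨m x, rfl⟩
        exact this
      have hiff : ∀ x y, δ.2 x < δ.2 y ↔ π.2 ((f ∘ m) x) < π.2 ((f ∘ m) y) :=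
        fun x y => (hm2 x y).trans (hf3 (m x) (m y))
      obtain ⟨x, y, hxy⟩ := hc i (f ∘ m) (hf1.comp hm1) hmem
      rcases hxy with ⟨h1, h2⟩ | ⟨h1, h2⟩
      · exact absurd ((hiff x y).mp h1) (not_lt.mpr h2)
      · exact absurd ((hiff x y).mpr h2) (not_lt.mpr h1)
    have := mem_mergeAll_replicate D hDclass k hk π c this
    exact this
    
lemma jep2 {C : Set PPerm} (hC : IsPermClass C) (hns : ¬ Splittable C)
    {a b : PPerm} (ha : a ∈ C) (hb : b ∈ C) :
    ∃ d ∈ C, Contains d a ∧ Contains d b := by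
  by_cases ha0 : a.1 = 0
  · exact ⟨b, hb, contains_of_len_zero ha0 b, contains_refl b⟩
  by_cases hb0 : b.1 = 0
  · exact ⟨a, ha, contains_refl a, contains_of_len_zero hb0 a⟩
  by_contra hcon
  push_neg at hcon
  apply hns
  have hpem : pempty ∈ C := pempty_mem hC ⟨a, ha⟩
  haveI : IsEmpty (Fin pempty.1) := ⟨fun x => Fin.elim0 x⟩
  have hpemAv : ∀ x : PPerm, x.1 ≠ 0 → pempty ∈ Av x := by
    intro x hx hcont
    obtain ⟨f, _, _⟩ := hcont
    exact absurd (f ⟨0, Nat.pos_of_ne_zero hx⟩).isLt (by simp [pempty])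
  have hmergeL : ∀ π : PPerm, IsMerge π π pempty := by
    intro π
    refine ⟨Set.univ, ⟨id, strictMono_id, Set.range_id, fun _ _ => Iff.rfl⟩,
      ⟨fun x => x.elim0, fun x => x.elim0, ?_, fun x => x.elim0⟩⟩
    rw [Set.compl_univ]
    exact Set.range_eq_empty _
  have hmergeR : ∀ π : PPerm, IsMerge π pempty π := by
    intro π
    refine ⟨∅, ⟨fun x => x.elim0, fun x => x.elim0, Set.range_eq_empty _, fun x => x.elim0⟩,
      ⟨id, strictMono_id, by rw [Set.compl_empty]; exact Set.range_id, fun _ _ => Iff.rfl⟩⟩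
  refine ⟨[C ∩ Av a, C ∩ Av b], by simp, ?_, ?_⟩
  · intro E hE
    have hclasses : ∀ x : PPerm, x ∈ C → IsPermClass (C ∩ Av x) ∧ C ∩ Av x ⊆ C ∧ C ∩ Av x ≠ C := by
      intro x hx
      refine ⟨isPermClass_inter hC (isPermClass_av x), Set.inter_subset_left, ?_⟩
      intro h
      have hx' : x ∈ C ∩ Av x := by rw [h]; exact hx
      exact hx'.2 (contains_refl x)
    rcases List.mem_pair.mp hE with rfl | rfl
    · exact hclasses a ha
    · exact hclasses b hb
  · intro π hπ
    show π ∈ MergeCl (C ∩ Av a) (C ∩ Av b)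
    by_cases hca : Contains π a
    · have hcb : ¬ Contains π b := by
        intro hcb
        exact hcon π hπ hca hcb
      exact ⟨pempty, ⟨hpem, hpemAv a ha0⟩, π, ⟨hπ, hcb⟩, hmergeR π⟩
    · exact ⟨π, ⟨hπ, hca⟩, pempty, ⟨hpem, hpemAv b hb0⟩, hmergeL π⟩

lemma jep_fin {C : Set PPerm} (hC : IsPermClass C) (hns : ¬ Splittable C) (hne : C.Nonempty) :
    ∀ (n : ℕ) (F : Fin n → PPerm), (∀ i, F i ∈ C) →
      ∃ d ∈ C, ∀ i, Contains d (F i) := by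
  intro n
  induction n with
  | zero =>
    intro F _
    obtain ⟨x, hx⟩ := hne
    exact ⟨x, hx, fun i => i.elim0⟩
  | succ n ih =>
    intro F hF
    obtain ⟨d', hd', hd'c⟩ := ih (fun i => F i.succ) (fun i => hF i.succ)
    obtain ⟨d, hd, hda, hdb⟩ := jep2 hC hns hd' (hF 0)
    refine ⟨d, hd, ?_⟩
    intro i
    induction i using Fin.cases with
    | zero => exact hdb
    | succ i' => exact contains_trans hda (hd'c i')

lemma jep_finite {C : Set PPerm} (hC : IsPermClass C) (hns : ¬ Splittable C) (hne : C.Nonempty)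
    {ι : Type} [Finite ι] (F : ι → PPerm) (hF : ∀ i, F i ∈ C) :
    ∃ d ∈ C, ∀ i, Contains d (F i) := by
  obtain ⟨n, ⟨e⟩⟩ := Finite.exists_equiv_fin ι
  obtain ⟨d, hd, hdc⟩ := jep_fin hC hns hne n (fun i => F (e.symm i)) (fun i => hF _)
  refine ⟨d, hd, fun i => ?_⟩
  have := hdc (e i)
  simpa using this

end RamseyJep
section Inflation

open Function Set

lemma lex_lt {t a₁ b₁ a₂ b₂ : ℕ} (h₁ : b₁ < t) (h₂ : b₂ < t) :
    t * a₁ + b₁ < t * a₂ + b₂ ↔ (a₁ < a₂ ∨ (a₁ = a₂ ∧ b₁ < b₂)) := by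
  constructor
  · intro h
    rcases lt_trichotomy a₁ a₂ with h' | h' | h'
    · exact Or.inl h'
    · subst h'; right; exact ⟨rfl, by omega⟩
    · exfalso
      have hmul : t * a₂ + t ≤ t * a₁ := by
        rw [← Nat.mul_succ]
        exact Nat.mul_le_mul_left t h'
      omega
  · rintro (h | ⟨rfl, h⟩)
    · have hmul : t * a₁ + t ≤ t * a₂ := by
        rw [← Nat.mul_succ]
        exact Nat.mul_le_mul_left t h
      omega
    · omega

lemma lex_eq {t a₁ b₁ a₂ b₂ : ℕ} (h₁ : b₁ < t) (h₂ : b₂ < t)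
    (h : t * a₁ + b₁ = t * a₂ + b₂) : a₁ = a₂ ∧ b₁ = b₂ := by
  rcases lt_trichotomy a₁ a₂ with hlt | heq | hgt
  · have := (lex_lt h₁ h₂).mpr (Or.inl hlt); omega
  · exact ⟨heq, by subst heq; omega⟩
  · have := (lex_lt h₂ h₁).mpr (Or.inl hgt); omega

lemma infl_exists (σ τ : PPerm) (ht : 0 < τ.1) :
    ∃ (π : PPerm) (g : Fin π.1 → Fin σ.1) (f : Fin σ.1 → Fin τ.1 → Fin π.1),
      Monotone g ∧ Surjective g ∧
      (∀ p q, g p ≠ g q → (π.2 p < π.2 q ↔ σ.2 (g p) < σ.2 (g q))) ∧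
      (∀ b, StrictMono (f b)) ∧ (∀ b r, g (f b r) = b) ∧
      (∀ b, Set.range (f b) = {p | g p = b}) ∧
      (∀ b r r', τ.2 r < τ.2 r' ↔ π.2 (f b r) < π.2 (f b r')) := by
  classical
  have hdiv : ∀ p : Fin (σ.1 * τ.1), p.val / τ.1 < σ.1 := by
    intro p
    rw [Nat.div_lt_iff_lt_mul ht]
    exact p.isLt
  have hmod : ∀ m : ℕ, m % τ.1 < τ.1 := fun m => Nat.mod_lt _ ht
  have hbound : ∀ (x : Fin σ.1) (y : Fin τ.1), τ.1 * x.val + y.val < σ.1 * τ.1 := by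
    intro x y
    have h1 : τ.1 * x.val + y.val < τ.1 * (x.val + 1) := by
      rw [Nat.mul_succ]; omega
    have h2 : τ.1 * (x.val + 1) ≤ τ.1 * σ.1 := Nat.mul_le_mul_left τ.1 x.isLt
    rw [Nat.mul_comm σ.1 τ.1]
    omega
  let gg : Fin (σ.1 * τ.1) → Fin σ.1 := fun p => ⟨p.val / τ.1, hdiv p⟩
  let md : Fin (σ.1 * τ.1) → Fin τ.1 := fun p => ⟨p.val % τ.1, hmod p.val⟩
  let vf : Fin (σ.1 * τ.1) → Fin (σ.1 * τ.1) := fun p =>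
    ⟨τ.1 * (σ.2 (gg p)).val + (τ.2 (md p)).val, hbound (σ.2 (gg p)) (τ.2 (md p))⟩
  have hrecon : ∀ p : Fin (σ.1 * τ.1), τ.1 * (gg p).val + (md p).val = p.val :=
    fun p => Nat.div_add_mod p.val τ.1
  have hvinj : Function.Injective vf := by
    intro p q hpq
    have hval := congrArg Fin.val hpq
    simp only [vf] at hval
    obtain ⟨h1, h2⟩ := lex_eq (τ.2 (md p)).isLt (τ.2 (md q)).isLt hval
    have hg : gg p = gg q := σ.2.injective (Fin.ext h1)
    have hm : md p = md q := τ.2.injective (Fin.ext h2)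
    apply Fin.ext
    rw [← hrecon p, ← hrecon q, hg, hm]
  let π : PPerm := ⟨σ.1 * τ.1, Equiv.ofBijective vf (Finite.injective_iff_bijective.mp hvinj)⟩
  have hπval : ∀ p, (π.2 p).val = τ.1 * (σ.2 (gg p)).val + (τ.2 (md p)).val := fun p => rfl
  let ff : Fin σ.1 → Fin τ.1 → Fin (σ.1 * τ.1) := fun b r => ⟨τ.1 * b.val + r.val, hbound b r⟩
  have hgf : ∀ b r, gg (ff b r) = b := by
    intro b r
    apply Fin.ext
    show (τ.1 * b.val + r.val) / τ.1 = b.val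
    rw [Nat.mul_add_div ht, Nat.div_eq_of_lt r.isLt]
    omega
  have hmf : ∀ b r, md (ff b r) = r := by
    intro b r
    apply Fin.ext
    show (τ.1 * b.val + r.val) % τ.1 = r.val
    rw [Nat.mul_add_mod, Nat.mod_eq_of_lt r.isLt]
  refine ⟨π, gg, ff, ?_, ?_, ?_, ?_, hgf, ?_, ?_⟩
  · intro p q hpq
    exact Nat.div_le_div_right hpq
  · intro b
    exact ⟨ff b ⟨0, ht⟩, hgf b ⟨0, ht⟩⟩
  · intro p q hne
    have hσne : (σ.2 (gg p)).val ≠ (σ.2 (gg q)).val := by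
      intro h
      exact hne (σ.2.injective (Fin.ext h))
    constructor
    · intro h
      have hlt : (π.2 p).val < (π.2 q).val := h
      rw [hπval p, hπval q] at hlt
      rcases (lex_lt (τ.2 (md p)).isLt (τ.2 (md q)).isLt).mp hlt with h' | ⟨h', _⟩
      · exact h'
      · exact absurd h' hσne
    · intro h
      show (π.2 p).val < (π.2 q).val
      rw [hπval p, hπval q]
      exact (lex_lt (τ.2 (md p)).isLt (τ.2 (md q)).isLt).mpr (Or.inl h)
  · intro b r r' hrr
    show (ff b r).val < (ff b r').val
    simp only [ff]
    omega
  · intro b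
    ext p
    constructor
    · rintro ⟨r, rfl⟩
      exact hgf b r
    · intro hp
      refine ⟨md p, ?_⟩
      apply Fin.ext
      show τ.1 * b.val + (md p).val = p.val
      have : (gg p).val = b.val := congrArg Fin.val hp
      rw [← this]
      exact hrecon p
  · intro b r r'
    constructor
    · intro h
      show (π.2 (ff b r)).val < (π.2 (ff b r')).val
      rw [hπval, hπval, hgf, hgf, hmf, hmf]
      have : (τ.2 r).val < (τ.2 r').val := h
      omega
    · intro h
      have hlt : (π.2 (ff b r)).val < (π.2 (ff b r')).val := h
      rw [hπval, hπval, hgf, hgf, hmf, hmf] at hlt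
      show (τ.2 r).val < (τ.2 r').val
      omega

end Inflation
/-- If `X` and `Y` are unsplittable classes, then so is `X[Y]`. -/
theorem stmt5 (X Y : Set PPerm) (hX : IsPermClass X) (hY : IsPermClass Y)
    (hX' : ¬ Splittable X) (hY' : ¬ Splittable Y) :
    ¬ Splittable (Inflate X Y) := by
  classical
  rintro ⟨Cs, hne, hprop, hsub⟩
  set Z := Inflate X Y with hZ
  set k := Cs.length with hkdef
  have hk : 0 < k := List.length_pos_iff.mpr hne
  have hCne : ∀ i : Fin k, (Cs.get i).Nonempty := by
    intro i
    by_contra hcon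
    rw [Set.not_nonempty_iff_eq_empty] at hcon
    have hmem : (∅ : Set PPerm) ∈ Cs := by rw [← hcon]; exact Cs.get_mem i
    have hZempty : Z = ∅ := by
      apply Set.eq_empty_iff_forall_notMem.mpr
      intro π hπ
      exact not_mem_mergeAll_of_empty Cs hne hmem π (hsub hπ)
    obtain ⟨_, hsubZ0, hneZ0⟩ := hprop (Cs.get ⟨0, hk⟩) (Cs.get_mem ⟨0, hk⟩)
    apply hneZ0
    have h1 : Cs.get ⟨0, hk⟩ ⊆ (∅ : Set PPerm) := by rw [← hZempty]; exact hsubZ0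
    rw [Set.subset_empty_iff.mp h1, hZempty]
  have hclass : ∀ i : Fin k, IsPermClass (Cs.get i) := fun i => (hprop _ (Cs.get_mem i)).1
  have hsubZ : ∀ i : Fin k, Cs.get i ⊆ Z := fun i => (hprop _ (Cs.get_mem i)).2.1
  have hneZ : ∀ i : Fin k, Cs.get i ≠ Z := fun i => (hprop _ (Cs.get_mem i)).2.2
  have hpemC : ∀ i : Fin k, pempty ∈ Cs.get i := fun i => pempty_mem (hclass i) (hCne i)
  have hδex : ∀ i : Fin k, ∃ δ, δ ∈ Z ∧ δ ∉ Cs.get i := by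
    intro i
    have hss : Cs.get i ⊂ Z := ⟨hsubZ i, fun h => hneZ i (le_antisymm (hsubZ i) h)⟩
    obtain ⟨δ, hδ1, hδ2⟩ := Set.exists_of_ssubset hss
    exact ⟨δ, hδ1, hδ2⟩
  choose δf hδZ hδn using hδex
  have hδstruct : ∀ i : Fin k, ∃ σ, σ ∈ X ∧ ∃ g : Fin (δf i).1 → Fin σ.1, Monotone g ∧
      Function.Surjective g ∧
      (∀ p q, g p ≠ g q → ((δf i).2 p < (δf i).2 q ↔ σ.2 (g p) < σ.2 (g q))) ∧
      ∀ b, ∃ τ, τ ∈ Y ∧ PatternOf (δf i) {p | g p = b} τ := by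
    intro i
    have h := hδZ i
    rw [hZ] at h
    exact h
  choose σf hσX gf hgmono hgsurj hgord hfib using hδstruct
  choose τf hτY hτpat using hfib
  choose ff hffm hffr hffo using hτpat
  have hδpos : ∀ i, 0 < (δf i).1 := by
    intro i
    by_contra h
    push_neg at h
    have h0 : (δf i).1 = 0 := by omega
    refine hδn i ?_
    rw [eq_pempty_of_len_zero h0]
    exact hpemC i
  have hσpos : ∀ i, 0 < (σf i).1 := by
    intro i
    by_contra h
    push_neg at h
    have h0 : (σf i).1 = 0 := by omega
    have hg := gf i ⟨0, hδpos i⟩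
    rw [h0] at hg
    exact hg.elim0
  have hτpos : ∀ i b, 0 < (τf i b).1 := by
    intro i b
    obtain ⟨p, hp⟩ := hgsurj i b
    have hp' : p ∈ Set.range (ff i b) := by rw [hffr i b]; exact hp
    obtain ⟨q, _⟩ := hp'
    exact q.pos
  have hXne : X.Nonempty := ⟨σf ⟨0, hk⟩, hσX _⟩
  have hYne : Y.Nonempty := ⟨τf ⟨0, hk⟩ ⟨0, hσpos ⟨0, hk⟩⟩, hτY _ _⟩
  obtain ⟨σs, hσsX, hσsc⟩ := jep_finite hX hX' hXne σf hσX
  obtain ⟨τs, hτsY, hτsc⟩ := jep_finite hY hY' hYne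
    (fun x : (i : Fin k) × Fin (σf i).1 => τf x.1 x.2) (fun x => hτY x.1 x.2)
  choose mσ hmσ1 hmσ2 using hσsc
  have hτc : ∀ i b, Contains τs (τf i b) := fun i b => hτsc ⟨i, b⟩
  choose uτ huτ1 huτ2 using hτc
  obtain ⟨σp, hσpX, hσpR⟩ := ramsey_of_unsplittable hX hX' hσsX k hk
  obtain ⟨τp, hτpY, hτpR⟩ := ramsey_of_unsplittable hY hY' hτsY k hk
  have hτspos : 0 < τs.1 := by
    have hu := uτ ⟨0, hk⟩ ⟨0, hσpos ⟨0, hk⟩⟩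
    exact (hu ⟨0, hτpos _ _⟩).pos
  have htppos : 0 < τp.1 := by
    obtain ⟨_, h, _, _, _⟩ := hτpR (fun _ => ⟨0, hk⟩)
    exact (h ⟨0, hτspos⟩).pos
  obtain ⟨P, g, f, hgm, hgs, hgo, hfm, hgf, hfr, hfo⟩ := infl_exists σp τp htppos
  have hPZ : P ∈ Z := by
    rw [hZ]
    refine ⟨σp, hσpX, g, hgm, hgs, hgo, ?_⟩
    intro b
    exact ⟨τp, hτpY, f b, hfm b, hfr b, hfo b⟩
  have hPM : P ∈ MergeAll Cs := hsub hPZ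
  obtain ⟨c, hc⟩ := mergeAll_extract Cs P hne hPM
  have hblock : ∀ b : Fin σp.1, ∃ i : Fin k, ∃ v : Fin τs.1 → Fin τp.1, StrictMono v ∧
      (∀ x, c (f b (v x)) = i) ∧ ∀ x y, τs.2 x < τs.2 y ↔ τp.2 (v x) < τp.2 (v y) :=
    fun b => hτpR (fun q => c (f b q))
  choose ib vb hvb1 hvb2 hvb3 using hblock
  obtain ⟨j, e', he'1, he'2, he'3⟩ := hσpR ib
  obtain ⟨ρ, hρC, fρ, hfρ1, hfρ2, hfρ3⟩ := hc j
  -- the block-composite embedding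
  set E : (b : Fin (σf j).1) → Fin (τf j b).1 → Fin P.1 :=
    fun b q => f (e' (mσ j b)) (vb (e' (mσ j b)) (uτ j b q)) with hE
  have hEc : ∀ b q, c (E b q) = j := by
    intro b q
    show c (f (e' (mσ j b)) (vb (e' (mσ j b)) (uτ j b q))) = j
    rw [hvb2 (e' (mσ j b)) (uτ j b q), he'2 (mσ j b)]
  have hEg : ∀ b q, g (E b q) = e' (mσ j b) := fun b q => hgf _ _
  have hEmono : ∀ b, StrictMono (E b) :=
    fun b => (hfm _).comp ((hvb1 _).comp (huτ1 j b))
  have hEord : ∀ b q q', (τf j b).2 q < (τf j b).2 q' ↔ P.2 (E b q) < P.2 (E b q') :=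
    fun b q q' => ((huτ2 j b q q').trans ((hvb3 (e' (mσ j b)) _ _).trans (hfo (e' (mσ j b)) _ _)))
  have hEeq : ∀ b b', b = b' → ∀ (q : Fin (τf j b).1) (q' : Fin (τf j b').1),
      ff j b q = ff j b' q' → E b q = E b' q' := by
    rintro b b' rfl q q' h
    have hq : q = q' := (hffm j b).injective h
    rw [hq]
  have hq : ∀ p : Fin (δf j).1, ∃ q, ff j (gf j p) q = p := by
    intro p
    have hm : p ∈ Set.range (ff j (gf j p)) := by
      rw [hffr j (gf j p)]
      exact rfl
    exact hm
  choose qf hqf using hq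
  set F : Fin (δf j).1 → Fin P.1 := fun p => E (gf j p) (qf p) with hF
  have hFc : ∀ p, c (F p) = j := fun p => hEc _ _
  have hFg : ∀ p, g (F p) = e' (mσ j (gf j p)) := fun p => hEg _ _
  have hmiff : ∀ b b', (σf j).2 b < (σf j).2 b' ↔
      σp.2 (e' (mσ j b)) < σp.2 (e' (mσ j b')) :=
    fun b b' => (hmσ2 j b b').trans (he'3 _ _)
  have hFmono : StrictMono F := by
    intro p p' hpp
    by_cases hbb : gf j p = gf j p'
    · obtain ⟨q2, hq2⟩ : ∃ q2, ff j (gf j p) q2 = p' := by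
        have hm : p' ∈ Set.range (ff j (gf j p)) := by
          rw [hffr j (gf j p)]
          exact hbb.symm
        exact hm
      have hE2 : F p' = E (gf j p) q2 :=
        hEeq (gf j p') (gf j p) hbb.symm (qf p') q2 (by rw [hqf p', hq2])
      have hqlt : qf p < q2 := by
        have hlt : ff j (gf j p) (qf p) < ff j (gf j p) q2 := by
          rw [hqf p, hq2]; exact hpp
        exact (hffm j (gf j p)).lt_iff_lt.mp hlt
      show F p < F p'
      rw [hE2]
      exact hEmono (gf j p) hqlt
    · have hlt : gf j p < gf j p' := lt_of_le_of_ne (hgmono j hpp.le) hbb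
      have hglt : g (F p) < g (F p') := by
        rw [hFg p, hFg p']
        exact he'1 (hmσ1 j hlt)
      by_contra hcon
      push_neg at hcon
      exact absurd (hgm hcon) (not_le.mpr hglt)
  have hFord : ∀ p p', (δf j).2 p < (δf j).2 p' ↔ P.2 (F p) < P.2 (F p') := by
    intro p p'
    by_cases hbb : gf j p = gf j p'
    · obtain ⟨q2, hq2⟩ : ∃ q2, ff j (gf j p) q2 = p' := by
        have hm : p' ∈ Set.range (ff j (gf j p)) := by
          rw [hffr j (gf j p)]
          exact hbb.symm
        exact hm
      have hE2 : F p' = E (gf j p) q2 :=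
        hEeq (gf j p') (gf j p) hbb.symm (qf p') q2 (by rw [hqf p', hq2])
      have h1 : (δf j).2 p < (δf j).2 p' ↔
          (τf j (gf j p)).2 (qf p) < (τf j (gf j p)).2 q2 := by
        conv_lhs => rw [← hqf p, ← hq2]
        exact (hffo j (gf j p) (qf p) q2).symm
      rw [h1, hE2]
      exact hEord (gf j p) (qf p) q2
    · have h1 := hgord j p p' hbb
      have hne2 : g (F p) ≠ g (F p') := by
        rw [hFg p, hFg p']
        intro h
        exact hbb ((hmσ1 j).injective (he'1.injective h))
      have h3 := hgo (F p) (F p') hne2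
      rw [hFg p, hFg p'] at h3
      rw [h1, hmiff (gf j p) (gf j p')]
      exact h3.symm
  have hcont : Contains ρ (δf j) := by
    apply contains_of_containsIn ⟨fρ, hfρ1, hfρ2, hfρ3⟩
    refine ⟨F, hFmono, ?_, hFord⟩
    intro p
    show F p ∈ {p | c p = j}
    exact hFc p
  exact hδn j (hclass j ρ hρC (δf j) hcont)
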